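/- Let n ≥ 2, d ≥ 1, g ≥ 1, and let t be a positive multiple of d with t ≥ 2 * d * log₂ n + d * log₂ g. Then for any given collection 𝒟 = {D₁, …, D_g} of g (not necessarily distinct) subsets of Fin n, each of size at most d, the random design on n items with 2t tests and column-sparsity t/d is 𝒟-distinguished (i.e., simultaneously Dᵢ-distinguishing for every i ∈ {1,…,g}) with probability at least 1 − 1/n. -/

import Mathlib

lemma desc_le (s t : ℕ) : 2^s * t.descFactorial s ≤ (2*t).descFactorial s := by
  induction s with
  | zero => simp
  | succ s ih =>
    rw [Nat.descFactorial_succ, Nat.descFactorial_succ, pow_succ]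
    calc 2 ^ s * 2 * ((t - s) * t.descFactorial s)
        = (2 * (t - s)) * (2 ^ s * t.descFactorial s) := by ring
      _ ≤ (2 * t - s) * (2*t).descFactorial s := by
          exact Nat.mul_le_mul (by omega) ih

lemma choose_le (s t : ℕ) : 2^s * Nat.choose t s ≤ Nat.choose (2*t) s := by
  have h := desc_le s t
  rw [Nat.descFactorial_eq_factorial_mul_choose, Nat.descFactorial_eq_factorial_mul_choose] at h
  have hp := Nat.factorial_pos s
  refine Nat.le_of_mul_le_mul_left ?_ hp
  calc Nat.factorial s * (2^s * Nat.choose t s) = 2^s * (Nat.factorial s * Nat.choose t s) := by ring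
    _ ≤ Nat.factorial s * Nat.choose (2*t) s := h

theorem prob_collection_distinguished_ge (n t d g : ℕ) (hn : 2 ≤ n) (hd : 1 ≤ d)
    (hg : 1 ≤ g) (ht : 0 < t) (hdvd : d ∣ t)
    (htb : 2 * (d : ℝ) * Real.logb 2 n + (d : ℝ) * Real.logb 2 g ≤ t)
    (D : Fin g → Finset (Fin n)) (hD : ∀ i, (D i).card ≤ d) :
    1 - 1 / (n : ℝ) ≤
      (((Finset.univ.filter
            (fun S : Fin n → Finset (Fin (2 * t)) => ∀ i, (S i).card = t / d)).filter
          (fun S => ∀ i : Fin g, ∀ j ∉ D i, ∃ a ∈ S j, ∀ k ∈ D i, a ∉ S k)).card : ℝ) /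
        ((Finset.univ.filter
            (fun S : Fin n → Finset (Fin (2 * t)) => ∀ i, (S i).card = t / d)).card : ℝ) := by
  classical
  set s := t / d with hs
  have hds : d * s = t := Nat.mul_div_cancel' hdvd
  set Ω := Finset.univ.filter (fun S : Fin n → Finset (Fin (2*t)) => ∀ i, (S i).card = s) with hΩ
  have hΩeq : Ω = Fintype.piFinset (fun _ : Fin n => (Finset.univ : Finset (Fin (2*t))).powersetCard s) := by
    ext S
    simp [hΩ, Fintype.mem_piFinset, Finset.mem_powersetCard]
  have hcardΩ : Ω.card = (Nat.choose (2*t) s)^n := by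
    rw [hΩeq, Fintype.card_piFinset]
    simp [Finset.card_powersetCard]
  -- bad events
  set bad : Fin g × Fin n → Finset (Fin n → Finset (Fin (2*t))) :=
    fun p => Ω.filter (fun S => p.2 ∉ D p.1 ∧ ∀ a ∈ S p.2, ∃ k ∈ D p.1, a ∈ S k) with hbad
  have hbadcard : ∀ p, (bad p).card ≤ Nat.choose t s * Nat.choose (2*t) s ^ (n-1) := by
    rintro ⟨i, j⟩
    by_cases hj : j ∈ D i
    · have : bad (i, j) = ∅ := by
        rw [hbad]
        apply Finset.filter_false_of_mem
        intro S _ ⟨h1, _⟩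
        exact h1 hj
      simp [this]
    · set B := bad (i, j) with hB
      set F : (Fin n → Finset (Fin (2*t))) → (Fin n → Finset (Fin (2*t))) :=
        fun S => Function.update S j ∅ with hF
      have hmemB : ∀ S ∈ B, (∀ k, (S k).card = s) ∧ (∀ a ∈ S j, ∃ k ∈ D i, a ∈ S k) := by
        intro S hS
        rw [hB, hbad, Finset.mem_filter, hΩ, Finset.mem_filter] at hS
        exact ⟨hS.1.2, hS.2.2⟩
      have hfiber : ∀ T ∈ Finset.image F B,
          (B.filter (fun S => F S = T)).card ≤ Nat.choose t s := by
        intro T hT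
        obtain ⟨S0, hS0, hS0T⟩ := Finset.mem_image.1 hT
        have hTcard : ∀ k, k ≠ j → (T k).card = s := by
          intro k hk
          rw [← hS0T]
          simp only [hF, Function.update_of_ne hk]
          exact (hmemB S0 hS0).1 k
        set U := (D i).biUnion T with hU
        have hUcard : U.card ≤ t := by
          calc U.card ≤ ∑ k ∈ D i, (T k).card := Finset.card_biUnion_le
            _ = (D i).card * s := by
                rw [Finset.sum_congr rfl (fun k hk => hTcard k (fun h => hj (h ▸ hk)))]
                simp [mul_comm]
            _ ≤ d * s := Nat.mul_le_mul_right s (hD i)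
            _ = t := hds
        calc (B.filter (fun S => F S = T)).card ≤ (Finset.powersetCard s U).card := by
              apply Finset.card_le_card_of_injOn (fun S => S j)
              · intro S hS
                rw [Finset.mem_coe, Finset.mem_filter] at hS
                obtain ⟨hSB, hST⟩ := hS
                rw [Finset.mem_coe, Finset.mem_powersetCard]
                refine ⟨?_, (hmemB S hSB).1 j⟩
                intro a ha
                obtain ⟨k, hk, hak⟩ := (hmemB S hSB).2 a ha
                have hkj : k ≠ j := fun h => hj (h ▸ hk)
                have : T k = S k := by
                  rw [← hST]; simp only [hF, Function.update_of_ne hkj]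
                exact Finset.mem_biUnion.2 ⟨k, hk, this ▸ hak⟩
              · intro S hS S' hS' hSS
                simp only [Finset.coe_filter, Set.mem_setOf_eq] at hS hS'
                funext k
                by_cases hk : k = j
                · subst hk; exact hSS
                · have := congrFun (hS.2.trans hS'.2.symm) k
                  simp only [hF, Function.update_of_ne hk] at this
                  exact this
          _ ≤ Nat.choose t s := by
              rw [Finset.card_powersetCard]
              exact Nat.choose_le_choose s hUcard
      have himage : (Finset.image F B).card ≤ Nat.choose (2*t) s ^ (n-1) := by
        have hsub : Finset.image F B ⊆ Fintype.piFinset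
            (fun k => if k = j then ({∅} : Finset (Finset (Fin (2*t)))) else Finset.univ.powersetCard s) := by
          intro T hT
          obtain ⟨S, hS, hST⟩ := Finset.mem_image.1 hT
          rw [Fintype.mem_piFinset]
          intro k
          by_cases hk : k = j
          · subst hk
            simp [← hST, hF]
          · rw [if_neg hk, ← hST]
            simp only [hF, Function.update_of_ne hk]
            rw [Finset.mem_powersetCard]
            exact ⟨Finset.subset_univ _, (hmemB S hS).1 k⟩
        calc (Finset.image F B).card ≤ _ := Finset.card_le_card hsub
          _ = Nat.choose (2*t) s ^ (n-1) := by
              rw [Fintype.card_piFinset]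
              rw [← Finset.mul_prod_erase Finset.univ _ (Finset.mem_univ j)]
              rw [if_pos rfl, Finset.card_singleton, one_mul]
              rw [Finset.prod_congr rfl
                (fun k hk => by rw [if_neg (Finset.ne_of_mem_erase hk)])]
              rw [Finset.prod_const, Finset.card_powersetCard]
              simp [Finset.card_erase_of_mem]
      calc (bad (i, j)).card ≤ Nat.choose t s * (Finset.image F B).card :=
            Finset.card_le_mul_card_image B (Nat.choose t s) hfiber
        _ ≤ Nat.choose t s * Nat.choose (2*t) s ^ (n-1) := Nat.mul_le_mul_left _ himage
  -- union bound
  set P : (Fin n → Finset (Fin (2*t))) → Prop :=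
    fun S => ∀ i : Fin g, ∀ j ∉ D i, ∃ a ∈ S j, ∀ k ∈ D i, a ∉ S k with hP
  have hsub : Ω.filter (fun S => ¬ P S) ⊆ (Finset.univ : Finset (Fin g × Fin n)).biUnion bad := by
    intro S hS
    rw [Finset.mem_filter] at hS
    obtain ⟨hSΩ, hnot⟩ := hS
    simp only [hP] at hnot
    push_neg at hnot
    obtain ⟨i, j, hj, hall⟩ := hnot
    refine Finset.mem_biUnion.2 ⟨(i, j), Finset.mem_univ _, ?_⟩
    rw [hbad, Finset.mem_filter]
    refine ⟨hSΩ, hj, fun a ha => ?_⟩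
    obtain ⟨k, hk, hk2⟩ := hall a ha
    exact ⟨k, hk, hk2⟩
  have hBcard : (Ω.filter (fun S => ¬ P S)).card ≤ g * n * (Nat.choose t s * Nat.choose (2*t) s ^ (n-1)) := by
    calc (Ω.filter (fun S => ¬ P S)).card ≤ ((Finset.univ : Finset (Fin g × Fin n)).biUnion bad).card :=
          Finset.card_le_card hsub
      _ ≤ ∑ p : Fin g × Fin n, (bad p).card := Finset.card_biUnion_le
      _ ≤ ∑ _p : Fin g × Fin n, (Nat.choose t s * Nat.choose (2*t) s ^ (n-1)) :=
          Finset.sum_le_sum (fun p _ => hbadcard p)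
      _ = g * n * (Nat.choose t s * Nat.choose (2*t) s ^ (n-1)) := by
          simp [Finset.card_univ, mul_assoc]
  have hsplit : (Ω.filter P).card + (Ω.filter (fun S => ¬ P S)).card = Ω.card :=
    Finset.card_filter_add_card_filter_not P
  -- positivity
  have hst : s ≤ 2*t := le_trans (Nat.div_le_self _ _) (by omega)
  have hcpos : 0 < Nat.choose (2*t) s := Nat.choose_pos hst
  -- the analytic bound : n^2 * g ≤ 2^s over ℝ
  have hdpos : (0:ℝ) < d := by exact_mod_cast Nat.lt_of_lt_of_le Nat.zero_lt_one hd
  have hnpos : (0:ℝ) < n := by exact_mod_cast Nat.lt_of_lt_of_le Nat.zero_lt_two hn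
  have hgpos : (0:ℝ) < g := by exact_mod_cast Nat.lt_of_lt_of_le Nat.zero_lt_one hg
  have hkey : (n:ℝ)^2 * g ≤ 2^s := by
    have htds : (t:ℝ) = d * s := by exact_mod_cast hds.symm
    have hsreal : 2 * Real.logb 2 n + Real.logb 2 g ≤ (s:ℝ) := by
      rw [htds] at htb
      nlinarith [htb]
    have h2 : (n:ℝ)^2 * g = (2:ℝ) ^ (2 * Real.logb 2 n + Real.logb 2 g) := by
      rw [Real.rpow_add (by norm_num : (0:ℝ) < 2), mul_comm (2:ℝ) (Real.logb 2 n),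
        Real.rpow_mul (by norm_num : (0:ℝ) ≤ 2), Real.rpow_logb (by norm_num) (by norm_num) hnpos,
        Real.rpow_logb (by norm_num) (by norm_num) hgpos, Real.rpow_two]
    calc (n:ℝ)^2 * g = (2:ℝ) ^ (2 * Real.logb 2 n + Real.logb 2 g) := h2
      _ ≤ (2:ℝ) ^ ((s:ℕ):ℝ) := Real.rpow_le_rpow_of_exponent_le (by norm_num) hsreal
      _ = 2^s := by rw [Real.rpow_natCast]
  -- final real arithmetic
  set a : ℝ := (Nat.choose t s : ℝ) with hareal
  set c : ℝ := (Nat.choose (2*t) s : ℝ) with hcreal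
  have hcpos' : (0:ℝ) < c := by rw [hcreal]; exact_mod_cast hcpos
  have hanneg : (0:ℝ) ≤ a := by positivity
  have hac : 2^s * a ≤ c := by
    rw [hareal, hcreal]
    exact_mod_cast choose_le s t
  set G : ℝ := ((Ω.filter P).card : ℝ) with hG
  set Bc : ℝ := ((Ω.filter (fun S => ¬ P S)).card : ℝ) with hBc
  have hsum : G + Bc = c^n := by
    rw [hG, hBc, ← Nat.cast_add, hsplit, hcardΩ]
    push_cast
    ring
  have hBcle : Bc ≤ (g:ℝ) * n * (a * c^(n-1)) := by
    rw [hBc]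
    calc ((Ω.filter (fun S => ¬ P S)).card : ℝ)
        ≤ ((g * n * (Nat.choose t s * Nat.choose (2*t) s ^ (n-1)) : ℕ) : ℝ) := by
          exact_mod_cast hBcard
      _ = (g:ℝ) * n * (a * c^(n-1)) := by push_cast; ring
  have hn2ga : (n:ℝ)^2 * g * a ≤ c := by
    calc (n:ℝ)^2 * g * a ≤ 2^s * a := mul_le_mul_of_nonneg_right hkey hanneg
      _ ≤ c := hac
  have hcc : c * c^(n-1) = c^n := by
    rw [← pow_succ']
    congr 1
    omega
  have h1 : (n:ℝ) * Bc ≤ c^n := by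
    calc (n:ℝ) * Bc ≤ (n:ℝ) * ((g:ℝ) * n * (a * c^(n-1))) :=
          mul_le_mul_of_nonneg_left hBcle hnpos.le
      _ = ((n:ℝ)^2 * g * a) * c^(n-1) := by ring
      _ ≤ c * c^(n-1) := mul_le_mul_of_nonneg_right hn2ga (by positivity)
      _ = c^n := hcc
  have hBcn : Bc ≤ c^n / n := by
    rw [le_div_iff₀ hnpos]
    linarith [h1]
  have hgoal : 1 - 1 / (n:ℝ) ≤ G / c^n := by
    rw [le_div_iff₀ (by positivity)]
    have : (1 - 1/(n:ℝ)) * c^n = c^n - c^n / n := by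
      field_simp
    rw [this]
    linarith [hsum, hBcn]
  calc 1 - 1 / (n:ℝ) ≤ G / c^n := hgoal
    _ = ((Ω.filter P).card : ℝ) / (Ω.card : ℝ) := by
        rw [hG, hcardΩ, hcreal]
        push_cast
        rfl
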